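/- Let J be a symmetric nonnegative measure on E × E vanishing on the diagonal, π a probability measure on E, and define D(f,f) = (1/2)∬ (f(x) − f(y))² J(dx,dy). Then λ₁ := inf{D(f,f) : π(f)=0, π(f²)=1} satisfies λ₁ ≥ inf_{B : π(B) ≤ 1/2} λ₀(B), where λ₀(B) := inf{D(f,f) : π(f²)=1, f = 0 on Bᶜ}. -/

import Mathlib

open MeasureTheory Set ENNReal Filter


lemma exists_median {E : Type*} [MeasurableSpace E] (π : Measure E) [IsProbabilityMeasure π]
    (f : E → ℝ) (hf : Measurable f) :
    ∃ c : ℝ, π {x | f x < c} ≤ 1/2 ∧ π {x | c < f x} ≤ 1/2 := by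
  set μ : ℝ → ℝ≥0∞ := fun t => π {x | f x ≤ t} with hμ
  have hmono : Monotone μ := fun s t hst => measure_mono (fun x hx => le_trans hx hst)
  set S : Set ℝ := {t | 1/2 ≤ μ t} with hS
  -- S nonempty
  have hne : S.Nonempty := by
    have hun : (⋃ n : ℕ, {x | f x ≤ (n:ℝ)}) = univ := by
      ext x; simp only [mem_iUnion, mem_univ, iff_true, mem_setOf_eq]
      exact exists_nat_ge (f x)
    have h1 : Tendsto (fun n : ℕ => μ (n:ℝ)) atTop (nhds (π univ)) := by
      have := tendsto_measure_iUnion_atTop (μ := π)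
        (s := fun n : ℕ => {x | f x ≤ (n:ℝ)})
        (fun m n hmn => fun x hx => by
          simp only [mem_setOf_eq] at hx ⊢
          exact le_trans hx (Nat.cast_le.mpr hmn))
      rwa [hun] at this
    rw [measure_univ] at h1
    have : ∀ᶠ n : ℕ in atTop, (1/2 : ℝ≥0∞) ≤ μ (n:ℝ) :=
      h1.eventually_const_le (by norm_num)
    obtain ⟨n, hn⟩ := this.exists
    exact ⟨(n:ℝ), hn⟩
  -- S bounded below
  have hbdd : BddBelow S := by
    have hin : (⋂ n : ℕ, {x | f x ≤ -(n:ℝ)}) = ∅ := by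
      ext x; simp only [mem_iInter, mem_empty_iff_false, iff_false, not_forall, mem_setOf_eq, not_le]
      obtain ⟨n, hn⟩ := exists_nat_gt (-(f x))
      exact ⟨n, by linarith⟩
    have h0 : Tendsto (fun n : ℕ => μ (-(n:ℝ))) atTop (nhds (π (⋂ n : ℕ, {x | f x ≤ -(n:ℝ)}))) := by
      exact tendsto_measure_iInter_atTop
        (fun n => (hf measurableSet_Iic).nullMeasurableSet)
        (fun m n hmn => fun x hx => by
          simp only [mem_setOf_eq] at hx ⊢
          exact le_trans hx (neg_le_neg (Nat.cast_le.mpr hmn)))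
        ⟨0, measure_ne_top _ _⟩
    rw [hin, measure_empty] at h0
    have : ∀ᶠ n : ℕ in atTop, μ (-(n:ℝ)) < 1/2 := h0.eventually_lt_const (by norm_num)
    obtain ⟨n, hn⟩ := this.exists
    refine ⟨-(n:ℝ), fun s hs => ?_⟩
    by_contra h
    push_neg at h
    exact absurd (le_trans hs (hmono h.le)) (not_le.mpr hn)
  set c := sInf S with hc
  refine ⟨c, ?_, ?_⟩
  · -- π {f < c} ≤ 1/2
    have hun : {x | f x < c} = ⋃ n : ℕ, {x | f x ≤ c - 1/(n+1)} := by
      ext x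
      simp only [mem_iUnion, mem_setOf_eq]
      constructor
      · intro hx
        obtain ⟨n, hn⟩ := exists_nat_one_div_lt (show 0 < c - f x by linarith)
        exact ⟨n, by push_cast at hn ⊢; linarith⟩
      · rintro ⟨n, hn⟩
        have : (0:ℝ) < 1/(n+1) := by positivity
        linarith
    rw [hun, Directed.measure_iUnion]
    · refine iSup_le fun n => ?_
      have hnotin : c - 1/(n+1) ∉ S := by
        intro h
        have := csInf_le hbdd h
        have hp : (0:ℝ) < 1/(n+1:ℝ) := by positivity
        rw [← hc] at this; linarith
      exact le_of_lt (not_le.mp hnotin)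
    · exact (Monotone.directed_le (fun m n hmn => fun x hx => by
        simp only [mem_setOf_eq] at hx ⊢
        have : (1:ℝ)/(n+1) ≤ 1/(m+1) := by
          apply one_div_le_one_div_of_le (by positivity)
            (by have := (Nat.cast_le (α := ℝ)).mpr hmn; linarith)
        linarith))
  · -- π {c < f} ≤ 1/2
    have hle : (1/2 : ℝ≥0∞) ≤ μ c := by
      have hin : {x | f x ≤ c} = ⋂ n : ℕ, {x | f x ≤ c + 1/(n+1)} := by
        ext x
        simp only [mem_iInter, mem_setOf_eq]
        constructor
        · intro hx n
          have : (0:ℝ) < 1/(n+1) := by positivity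
          linarith
        · intro hx
          by_contra h
          push_neg at h
          obtain ⟨n, hn⟩ := exists_nat_one_div_lt (show 0 < f x - c by linarith)
          have := hx n
          push_cast at hn
          linarith
      have h0 : Tendsto (fun n : ℕ => μ (c + 1/(n+1))) atTop (nhds (π (⋂ n : ℕ, {x | f x ≤ c + 1/(n+1)}))) := by
        exact tendsto_measure_iInter_atTop
          (fun n => (hf measurableSet_Iic).nullMeasurableSet)
          (fun m n hmn => fun x hx => by
            simp only [mem_setOf_eq] at hx ⊢
            have : (1:ℝ)/(n+1) ≤ 1/(m+1) :=
              one_div_le_one_div_of_le (by positivity)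
                (by have := (Nat.cast_le (α := ℝ)).mpr hmn; linarith)
            linarith)
          ⟨0, measure_ne_top _ _⟩
      rw [← hin] at h0
      refine ge_of_tendsto h0 (Eventually.of_forall fun n => ?_)
      have hlt : c < c + 1/(n+1) := by
        have : (0:ℝ) < 1/(n+1) := by positivity
        linarith
      obtain ⟨s, hsS, hs⟩ := exists_lt_of_csInf_lt hne (show sInf S < c + 1/(n+1) from hlt)
      exact le_trans hsS (hmono hs.le)
    have hcompl : {x | c < f x} = {x | f x ≤ c}ᶜ := by
      ext x; simp [not_le]
    have hms : MeasurableSet {x | f x ≤ c} := hf measurableSet_Iic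
    rw [hcompl, measure_compl hms (measure_ne_top _ _), measure_univ]
    refine tsub_le_iff_right.mpr ?_
    calc (1:ℝ≥0∞) = 1/2 + 1/2 := by rw [ENNReal.add_halves]
    _ ≤ 1/2 + μ c := by exact add_le_add_right hle _

-- pointwise splitting inequality
lemma ptwise (a b : ℝ) :
    (max a 0 - max b 0)^2 + (max (-a) 0 - max (-b) 0)^2 ≤ (a - b)^2 := by
  rcases le_total 0 a with ha | ha <;> rcases le_total 0 b with hb | hb <;>
    simp [max_eq_left, max_eq_right, ha, hb, neg_nonneg.mpr, neg_nonpos.mpr] <;>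
    nlinarith

lemma ptsq (a : ℝ) : (max a 0)^2 + (max (-a) 0)^2 = a^2 := by
  rcases le_total 0 a with ha | ha <;>
    simp [max_eq_left, max_eq_right, ha, neg_nonneg.mpr, neg_nonpos.mpr] <;> ring

-- case selection lemma
lemma caselem (a b : ℝ) (ha : 0 ≤ a) (hb : 0 ≤ b) (hab : 1 ≤ a + b)
    (P Q Df : ℝ≥0∞) (hPQ : P + Q ≤ Df) :
    (0 < a ∧ (ENNReal.ofReal a)⁻¹ * P ≤ Df) ∨ (0 < b ∧ (ENNReal.ofReal b)⁻¹ * Q ≤ Df) := by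
  rcases eq_or_lt_of_le ha with ha0 | ha0
  · right
    have hb1 : 1 ≤ b := by linarith
    refine ⟨by linarith, ?_⟩
    calc (ENNReal.ofReal b)⁻¹ * Q ≤ 1 * Q := by
          gcongr
          rw [ENNReal.inv_le_one, ← ENNReal.ofReal_one]
          exact ENNReal.ofReal_le_ofReal hb1
    _ = Q := one_mul Q
    _ ≤ Df := le_trans le_add_self hPQ
  rcases eq_or_lt_of_le hb with hb0 | hb0
  · left
    have ha1 : 1 ≤ a := by linarith
    refine ⟨ha0, ?_⟩
    calc (ENNReal.ofReal a)⁻¹ * P ≤ 1 * P := by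
          gcongr
          rw [ENNReal.inv_le_one, ← ENNReal.ofReal_one]
          exact ENNReal.ofReal_le_ofReal ha1
    _ = P := one_mul P
    _ ≤ Df := le_trans le_self_add hPQ
  -- both positive
  by_cases hDf : Df = ⊤
  · left; exact ⟨ha0, by simp [hDf]⟩
  by_contra hcon
  push_neg at hcon
  obtain ⟨h1, h2⟩ := hcon
  have hP := h1 ha0
  have hQ := h2 hb0
  have hPfin : P ≠ ⊤ := fun h => hDf (top_le_iff.mp (le_trans (by simp [h]) hPQ))
  have hQfin : Q ≠ ⊤ := fun h => hDf (top_le_iff.mp (le_trans (by simp [h]) hPQ))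
  -- convert to reals
  have hPr : P.toReal > a * Df.toReal := by
    have := hP
    have h' : ENNReal.ofReal a * Df < P := by
      rw [← ENNReal.div_eq_inv_mul] at this
      rw [mul_comm]
      exact (ENNReal.lt_div_iff_mul_lt (Or.inl (by simp [ha0])) (Or.inl ENNReal.ofReal_ne_top)).mp this
    have := ENNReal.toReal_lt_toReal (by finiteness) hPfin |>.mpr h'
    rwa [ENNReal.toReal_mul, ENNReal.toReal_ofReal ha] at this
  have hQr : Q.toReal > b * Df.toReal := by
    have := hQ
    have h' : ENNReal.ofReal b * Df < Q := by
      rw [← ENNReal.div_eq_inv_mul] at this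
      rw [mul_comm]
      exact (ENNReal.lt_div_iff_mul_lt (Or.inl (by simp [hb0])) (Or.inl ENNReal.ofReal_ne_top)).mp this
    have := ENNReal.toReal_lt_toReal (by finiteness) hQfin |>.mpr h'
    rwa [ENNReal.toReal_mul, ENNReal.toReal_ofReal hb] at this
  have hsum : P.toReal + Q.toReal ≤ Df.toReal := by
    rw [← ENNReal.toReal_add hPfin hQfin]
    exact ENNReal.toReal_mono hDf hPQ
  have hDfnn : 0 ≤ Df.toReal := ENNReal.toReal_nonneg
  nlinarith


-- normalization lemma
lemma side {E : Type*} [MeasurableSpace E] (π : Measure E) (J : Measure (E × E))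
    (D : (E → ℝ) → ℝ≥0∞)
    (hD : ∀ f, D f = (1 / 2 : ℝ≥0∞) * ∫⁻ p, ENNReal.ofReal ((f p.1 - f p.2) ^ 2) ∂J)
    (lam0 : Set E → ℝ≥0∞)
    (hlam0 : ∀ B, lam0 B = sInf {r | ∃ f : E → ℝ, Measurable f ∧
        (∀ x ∈ Bᶜ, f x = 0) ∧ (∫ x, (f x) ^ 2 ∂π) = 1 ∧ r = D f})
    (u : E → ℝ) (hu : Measurable u) (B : Set E) (hsupp : ∀ x ∈ Bᶜ, u x = 0)
    (a : ℝ) (ha : 0 < a) (hInt : (∫ x, (u x) ^ 2 ∂π) = a) :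
    lam0 B ≤ (ENNReal.ofReal a)⁻¹ * D u := by
  set h : E → ℝ := fun x => u x / Real.sqrt a with hh
  have hhm : Measurable h := hu.div_const _
  have hsq : ∀ x, (h x)^2 = (u x)^2 / a := by
    intro x
    rw [hh]
    simp only
    rw [div_pow, Real.sq_sqrt ha.le]
  have hint : (∫ x, (h x)^2 ∂π) = 1 := by
    simp_rw [hsq]
    rw [integral_div, hInt, div_self (ne_of_gt ha)]
  have hDh : D h = (ENNReal.ofReal a)⁻¹ * D u := by
    rw [hD h, hD u]
    have hpt : ∀ p : E × E, ENNReal.ofReal ((h p.1 - h p.2)^2)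
        = (ENNReal.ofReal a)⁻¹ * ENNReal.ofReal ((u p.1 - u p.2)^2) := by
      intro p
      have h2 : (h p.1 - h p.2)^2 = (u p.1 - u p.2)^2 / a := by
        rw [hh]
        simp only
        rw [div_sub_div_same, div_pow, Real.sq_sqrt ha.le]
      rw [h2, ENNReal.ofReal_div_of_pos ha, ENNReal.div_eq_inv_mul]
    have hmeas : Measurable fun p : E × E => ENNReal.ofReal ((u p.1 - u p.2)^2) :=
      (((hu.comp measurable_fst).sub (hu.comp measurable_snd)).pow_const 2).ennreal_ofReal
    rw [lintegral_congr hpt, lintegral_const_mul _ hmeas]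
    ring
  rw [hlam0 B, ← hDh]
  refine sInf_le ?_
  exact ⟨h, hhm, fun x hx => by rw [hh]; simp only; rw [hsupp x hx, zero_div], hint, rfl⟩

theorem stmt4 {E : Type*} [MeasurableSpace E] (π : Measure E) [IsProbabilityMeasure π]
    (J : Measure (E × E)) (hsym : Measure.map Prod.swap J = J)
    (hdiag : J {p : E × E | p.1 = p.2} = 0)
    (D : (E → ℝ) → ℝ≥0∞)
    (hD : ∀ f, D f = (1 / 2 : ℝ≥0∞) * ∫⁻ p, ENNReal.ofReal ((f p.1 - f p.2) ^ 2) ∂J)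
    (lam1 : ℝ≥0∞)
    (hlam1 : lam1 = sInf {r | ∃ f : E → ℝ, Measurable f ∧ (∫ x, f x ∂π) = 0 ∧
        (∫ x, (f x) ^ 2 ∂π) = 1 ∧ r = D f})
    (lam0 : Set E → ℝ≥0∞)
    (hlam0 : ∀ B, lam0 B = sInf {r | ∃ f : E → ℝ, Measurable f ∧
        (∀ x ∈ Bᶜ, f x = 0) ∧ (∫ x, (f x) ^ 2 ∂π) = 1 ∧ r = D f}) :
    lam1 ≥ ⨅ B ∈ {B : Set E | MeasurableSet B ∧ π B ≤ 1 / 2}, lam0 B := by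
  rw [hlam1]
  refine le_sInf fun r hr => ?_
  obtain ⟨f, hfm, hf0, hf1, rfl⟩ := hr
  -- integrability
  have hint2 : Integrable (fun x => (f x)^2) π := by
    by_contra h
    rw [integral_undef h] at hf1
    norm_num at hf1
  have hint1 : Integrable f π := by
    refine Integrable.mono' ((integrable_const (1:ℝ)).add hint2) hfm.aestronglyMeasurable
      (Eventually.of_forall fun x => ?_)
    have h1 : ‖f x‖ = |f x| := rfl
    rw [h1]
    simp only [Pi.add_apply]
    nlinarith [sq_nonneg (|f x| - 1), sq_abs (f x), abs_nonneg (f x)]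
  -- median
  obtain ⟨c, hc1, hc2⟩ := exists_median π f hfm
  set gp : E → ℝ := fun x => max (f x - c) 0 with hgp
  set gm : E → ℝ := fun x => max (-(f x - c)) 0 with hgm
  have hgpm : Measurable gp := (hfm.sub measurable_const).max measurable_const
  have hgmm : Measurable gm := (hfm.sub measurable_const).neg.max measurable_const
  -- integral of (f - c)^2
  have hexp : (fun x => (f x - c)^2) = fun x => ((f x)^2 - (2*c)*(f x)) + c^2 := by
    funext x; ring
  have hintc : Integrable (fun x => (f x - c)^2) π := by
    rw [hexp]
    exact (hint2.sub (hint1.const_mul (2*c))).add (integrable_const _)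
  have hsub : Integrable (fun x => (f x)^2 - (2*c)*(f x)) π := hint2.sub (hint1.const_mul (2*c))
  have hIfc : (∫ x, (f x - c)^2 ∂π) = 1 + c^2 := by
    rw [hexp, integral_add hsub (integrable_const _),
      integral_sub hint2 (hint1.const_mul (2*c)), integral_const_mul, hf0, hf1, integral_const]
    simp
  -- integrability of gp^2 and gm^2
  have hmaxsq : ∀ v : ℝ, (max v 0)^2 ≤ v^2 := by
    intro v
    rcases le_total 0 v with h | h
    · rw [max_eq_left h]
    · rw [max_eq_right h]
      simpa using sq_nonneg v
  have hintgp : Integrable (fun x => (gp x)^2) π := by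
    refine Integrable.mono' hintc (hgpm.pow_const 2).aestronglyMeasurable
      (Eventually.of_forall fun x => ?_)
    rw [Real.norm_eq_abs, abs_of_nonneg (sq_nonneg _)]
    exact hmaxsq _
  have hintgm : Integrable (fun x => (gm x)^2) π := by
    refine Integrable.mono' hintc
      (hgmm.pow_const 2).aestronglyMeasurable (Eventually.of_forall fun x => ?_)
    rw [Real.norm_eq_abs, abs_of_nonneg (sq_nonneg _)]
    calc (gm x)^2 ≤ (-(f x - c))^2 := hmaxsq _
    _ = (f x - c)^2 := by ring
  set a : ℝ := ∫ x, (gp x)^2 ∂π with haD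
  set b : ℝ := ∫ x, (gm x)^2 ∂π with hbD
  have ha0 : 0 ≤ a := integral_nonneg fun x => sq_nonneg _
  have hb0 : 0 ≤ b := integral_nonneg fun x => sq_nonneg _
  have hab : a + b = 1 + c^2 := by
    rw [haD, hbD, ← integral_add hintgp hintgm, ← hIfc]
    congr 1
    funext x
    exact ptsq (f x - c)
  have hab1 : (1:ℝ) ≤ a + b := by nlinarith [sq_nonneg c]
  -- splitting of Dirichlet forms
  have hDsplit : D gp + D gm ≤ D f := by
    rw [hD gp, hD gm, hD f, ← mul_add]
    refine mul_le_mul_right ?_ _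
    have hmeas : Measurable fun p : E × E => ENNReal.ofReal ((gp p.1 - gp p.2)^2) :=
      (((hgpm.comp measurable_fst).sub (hgpm.comp measurable_snd)).pow_const 2).ennreal_ofReal
    rw [← lintegral_add_left hmeas]
    refine lintegral_mono fun p => ?_
    rw [← ENNReal.ofReal_add (sq_nonneg _) (sq_nonneg _)]
    refine ENNReal.ofReal_le_ofReal ?_
    have := ptwise (f p.1 - c) (f p.2 - c)
    calc (gp p.1 - gp p.2)^2 + (gm p.1 - gm p.2)^2
        = (max (f p.1 - c) 0 - max (f p.2 - c) 0)^2
          + (max (-(f p.1 - c)) 0 - max (-(f p.2 - c)) 0)^2 := rfl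
    _ ≤ ((f p.1 - c) - (f p.2 - c))^2 := this
    _ = (f p.1 - f p.2)^2 := by ring
  -- case selection
  rcases caselem a b ha0 hb0 hab1 (D gp) (D gm) (D f) hDsplit with ⟨hpos, hle⟩ | ⟨hpos, hle⟩
  · -- use B = {c < f}
    refine le_trans (iInf₂_le {x | c < f x} ⟨measurableSet_lt measurable_const hfm, hc2⟩) ?_
    refine le_trans (side π J D hD lam0 hlam0 gp hgpm {x | c < f x} ?_ a hpos haD.symm) hle
    intro x hx
    simp only [mem_compl_iff, mem_setOf_eq, not_lt] at hx
    rw [hgp]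
    simp only
    rw [max_eq_right (by linarith)]
  · -- use B = {f < c}
    refine le_trans (iInf₂_le {x | f x < c} ⟨measurableSet_lt hfm measurable_const, hc1⟩) ?_
    refine le_trans (side π J D hD lam0 hlam0 gm hgmm {x | f x < c} ?_ b hpos hbD.symm) hle
    intro x hx
    simp only [mem_compl_iff, mem_setOf_eq, not_lt] at hx
    rw [hgm]
    simp only
    rw [max_eq_right (by linarith)]
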